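/- Let k ≥ 2 and n ≥ 0. For every equivalence class C of ≡_k on S_n there exist permutations α, ω ∈ C such that C = {σ ∈ S_n : Inv(α) ⊆ Inv(σ) ⊆ Inv(ω)}; in other words, every k-recoil class is an interval of the right weak order. -/

import Mathlib

/-- The `k`-recoil equivalence `≡_k` on `Equiv.Perm (Fin n)`.
Values are 0-indexed: `a : Fin n` represents the value `a+1` of the paper.
`σ ≡_k τ` iff for all values `a < b` with `b - a < k`,
`σ⁻¹(a) < σ⁻¹(b) ↔ τ⁻¹(a) < τ⁻¹(b)`. -/
def recoilEquiv (k n : ℕ) (σ τ : Equiv.Perm (Fin n)) : Prop :=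
  ∀ a b : Fin n, (a : ℕ) < b → (b : ℕ) - a < k →
    (σ.symm a < σ.symm b ↔ τ.symm a < τ.symm b)

/-- The inversion set of a permutation: pairs of values `a < b` that appear
in the order `… b … a …` in the one-line word of `σ`. -/
def invSet {n : ℕ} (σ : Equiv.Perm (Fin n)) : Set (Fin n × Fin n) :=
  {p | p.1 < p.2 ∧ σ.symm p.2 < σ.symm p.1}

/-- The extension `σ̃ : ℤ → ℤ` of `σ ∈ S_n` (1-indexed) fixing all `i ∉ [1, n]`. -/
def extPerm {n : ℕ} (σ : Equiv.Perm (Fin n)) : ℤ → ℤ := fun i =>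
  if h : 0 < i ∧ i ≤ (n : ℤ) then ((σ ⟨(i - 1).toNat, by omega⟩ : Fin n) : ℤ) + 1 else i

/-- The `k`-descent code: `DC k σ ℓ` is `d_{ℓ+1}` of the paper, the rank of
`σ̃(ℓ+1)` among the `k` entries `σ̃(ℓ+1-k+1), …, σ̃(ℓ+1)` (positions 1-indexed). -/
noncomputable def DC (k : ℕ) {n : ℕ} (σ : Equiv.Perm (Fin n)) : Fin n → ℕ := fun ℓ =>
  ((Finset.Icc ((ℓ : ℤ) + 1 - k + 1) ((ℓ : ℤ) + 1)).filter
    (fun j => extPerm σ j ≤ extPerm σ ((ℓ : ℤ) + 1))).card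

/-- `σ` is `k`-minimal: no index `i` with `σ(i) - σ(i+1) ≥ k`. -/
def kMinimal (k : ℕ) {n : ℕ} (σ : Equiv.Perm (Fin n)) : Prop :=
  ¬ ∃ (i : ℕ) (h : i + 1 < n),
      (σ ⟨i + 1, h⟩ : ℕ) + k ≤ (σ ⟨i, Nat.lt_of_succ_lt h⟩ : ℕ)

/-- `σ` is `k`-maximal: no index `i` with `σ(i+1) - σ(i) ≥ k`. -/
def kMaximal (k : ℕ) {n : ℕ} (σ : Equiv.Perm (Fin n)) : Prop :=
  ¬ ∃ (i : ℕ) (h : i + 1 < n),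
      (σ ⟨i, Nat.lt_of_succ_lt h⟩ : ℕ) + k ≤ (σ ⟨i + 1, h⟩ : ℕ)

/-- Shifted concatenation `σ • τ` of two permutations. -/
def shiftConcat {m n : ℕ} (σ : Equiv.Perm (Fin m)) (τ : Equiv.Perm (Fin n)) :
    Equiv.Perm (Fin (m + n)) :=
  finSumFinEquiv.symm.trans ((Equiv.sumCongr σ τ).trans finSumFinEquiv)

/-- `π` is `•`-indecomposable: no proper prefix of positions maps onto
a prefix of values. -/
def indecomposable {n : ℕ} (π : Equiv.Perm (Fin n)) : Prop :=
  ¬ ∃ m : ℕ, 0 < m ∧ m < n ∧ ∀ i : Fin n, (i : ℕ) < m → (π i : ℕ) < m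

namespace RecoilAux

variable {k n : ℕ}

lemma recoil_refl (σ : Equiv.Perm (Fin n)) : recoilEquiv k n σ σ := fun _ _ _ _ => Iff.rfl

lemma recoil_symm {σ τ : Equiv.Perm (Fin n)} (h : recoilEquiv k n σ τ) : recoilEquiv k n τ σ :=
  fun a b h1 h2 => (h a b h1 h2).symm

lemma recoil_trans {σ τ ρ : Equiv.Perm (Fin n)} (h : recoilEquiv k n σ τ)
    (h' : recoilEquiv k n τ ρ) : recoilEquiv k n σ ρ :=
  fun a b h1 h2 => (h a b h1 h2).trans (h' a b h1 h2)

lemma symm_mul_swap (σ : Equiv.Perm (Fin n)) (x y v : Fin n) :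
    (σ * Equiv.swap x y).symm v = Equiv.swap x y (σ.symm v) := by
  rw [Equiv.Perm.mul_def, Equiv.symm_trans_apply, Equiv.symm_swap]

lemma swap_adj_lt {i : ℕ} (hi : i + 1 < n) {x y : Fin n} (hxy : x < y)
    (h1 : ¬ (x = ⟨i, Nat.lt_of_succ_lt hi⟩ ∧ y = ⟨i+1, hi⟩)) :
    Equiv.swap ⟨i, Nat.lt_of_succ_lt hi⟩ ⟨i+1, hi⟩ x
      < Equiv.swap ⟨i, Nat.lt_of_succ_lt hi⟩ ⟨i+1, hi⟩ y := by
  simp only [Equiv.swap_apply_def]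
  split_ifs with h2 h3 h4 h5 h6 h7 h8 <;>
    first
      | (simp only [Fin.ext_iff, Fin.lt_def, not_and] at h1 hxy h2 h3 h4 h5 h6 h7 h8 ⊢ <;> omega)
      | (simp only [Fin.ext_iff, Fin.lt_def, not_and] at * <;> omega)

/-- swapping two adjacent positions whose entries differ by at least `k` preserves `≡_k`. -/
lemma step_recoil {σ : Equiv.Perm (Fin n)} {i : ℕ} (hi : i + 1 < n)
    (hd : (σ ⟨i+1, hi⟩ : ℕ) + k ≤ (σ ⟨i, Nat.lt_of_succ_lt hi⟩ : ℕ) ∨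
          (σ ⟨i, Nat.lt_of_succ_lt hi⟩ : ℕ) + k ≤ (σ ⟨i+1, hi⟩ : ℕ)) :
    recoilEquiv k n σ (σ * Equiv.swap ⟨i, Nat.lt_of_succ_lt hi⟩ ⟨i+1, hi⟩) := by
  intro a b hab hshort
  rw [symm_mul_swap, symm_mul_swap]
  constructor
  · intro hlt
    refine swap_adj_lt hi hlt ?_
    rintro ⟨h1, h2⟩
    have hu : a = σ ⟨i, Nat.lt_of_succ_lt hi⟩ := by rw [← h1, Equiv.apply_symm_apply]
    have hv : b = σ ⟨i+1, hi⟩ := by rw [← h2, Equiv.apply_symm_apply]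
    rw [hu, hv] at hab hshort
    omega
  · intro hlt
    by_contra hcon
    have hne : σ.symm a ≠ σ.symm b := fun he => by
      have := σ.symm.injective he; subst this; omega
    have hba : σ.symm b < σ.symm a := lt_of_le_of_ne (le_of_not_gt hcon) (Ne.symm hne)
    refine absurd hlt (lt_asymm (swap_adj_lt hi hba ?_))
    rintro ⟨h1, h2⟩
    have hb : b = σ ⟨i, Nat.lt_of_succ_lt hi⟩ := by rw [← h1, Equiv.apply_symm_apply]
    have ha : a = σ ⟨i+1, hi⟩ := by rw [← h2, Equiv.apply_symm_apply]
    rw [ha, hb] at hab hshort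
    omega

lemma kMinimal_adj {α : Equiv.Perm (Fin n)} (hmin : kMinimal k α) {x y : Fin n}
    (hxy : (x : ℕ) + 1 = (y : ℕ)) (hle : (α y : ℕ) + k ≤ (α x : ℕ)) : False := by
  obtain ⟨xv, hxv⟩ := x
  obtain ⟨yv, hyv⟩ := y
  simp only [] at hxy hle
  have hy : yv = xv + 1 := by omega
  subst hy
  exact hmin ⟨xv, hyv, hle⟩

lemma kMaximal_adj {ω : Equiv.Perm (Fin n)} (hmax : kMaximal k ω) {x y : Fin n}
    (hxy : (x : ℕ) + 1 = (y : ℕ)) (hle : (ω x : ℕ) + k ≤ (ω y : ℕ)) : False := by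
  obtain ⟨xv, hxv⟩ := x
  obtain ⟨yv, hyv⟩ := y
  simp only [] at hxy hle
  have hy : yv = xv + 1 := by omega
  subst hy
  exact hmax ⟨xv, hyv, hle⟩

def invCount (σ : Equiv.Perm (Fin n)) : ℕ :=
  (Finset.univ.filter (fun p : Fin n × Fin n => p.1 < p.2 ∧ σ.symm p.2 < σ.symm p.1)).card

def coinvCount (σ : Equiv.Perm (Fin n)) : ℕ :=
  (Finset.univ.filter (fun p : Fin n × Fin n => p.1 < p.2 ∧ σ.symm p.1 < σ.symm p.2)).card

lemma invCount_step {σ : Equiv.Perm (Fin n)} {i : ℕ} (hi : i + 1 < n)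
    (hd : (σ ⟨i+1, hi⟩ : ℕ) + k ≤ (σ ⟨i, Nat.lt_of_succ_lt hi⟩ : ℕ)) (hk : 2 ≤ k) :
    invCount (σ * Equiv.swap ⟨i, Nat.lt_of_succ_lt hi⟩ ⟨i+1, hi⟩) < invCount σ := by
  apply Finset.card_lt_card
  rw [Finset.ssubset_iff_of_subset]
  · refine ⟨(σ ⟨i+1, hi⟩, σ ⟨i, Nat.lt_of_succ_lt hi⟩), ?_, ?_⟩
    · simp only [Finset.mem_filter, Finset.mem_univ, true_and]
      refine ⟨by rw [Fin.lt_def]; omega, ?_⟩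
      rw [Equiv.symm_apply_apply, Equiv.symm_apply_apply, Fin.lt_def]
      simp only []
      omega
    · simp only [Finset.mem_filter, Finset.mem_univ, true_and, not_and]
      intro _
      rw [symm_mul_swap, symm_mul_swap, Equiv.symm_apply_apply, Equiv.symm_apply_apply,
        Equiv.swap_apply_left, Equiv.swap_apply_right, Fin.lt_def]
      simp only []
      omega
  · intro p hp
    simp only [Finset.mem_filter, Finset.mem_univ, true_and] at hp ⊢
    obtain ⟨h12, hinv⟩ := hp
    rw [symm_mul_swap, symm_mul_swap] at hinv
    refine ⟨h12, ?_⟩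
    by_contra hcon
    have hne : σ.symm p.1 ≠ σ.symm p.2 := fun he => absurd (σ.symm.injective he) (ne_of_lt h12)
    have h12' : σ.symm p.1 < σ.symm p.2 := lt_of_le_of_ne (le_of_not_gt hcon) hne
    refine absurd hinv (lt_asymm (swap_adj_lt hi h12' ?_))
    rintro ⟨h1, h2⟩
    have hu : p.1 = σ ⟨i, Nat.lt_of_succ_lt hi⟩ := by rw [← h1, Equiv.apply_symm_apply]
    have hv : p.2 = σ ⟨i+1, hi⟩ := by rw [← h2, Equiv.apply_symm_apply]
    rw [Fin.lt_def, hu, hv] at h12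
    omega

lemma coinvCount_step {σ : Equiv.Perm (Fin n)} {i : ℕ} (hi : i + 1 < n)
    (hd : (σ ⟨i, Nat.lt_of_succ_lt hi⟩ : ℕ) + k ≤ (σ ⟨i+1, hi⟩ : ℕ)) (hk : 2 ≤ k) :
    coinvCount (σ * Equiv.swap ⟨i, Nat.lt_of_succ_lt hi⟩ ⟨i+1, hi⟩) < coinvCount σ := by
  apply Finset.card_lt_card
  rw [Finset.ssubset_iff_of_subset]
  · refine ⟨(σ ⟨i, Nat.lt_of_succ_lt hi⟩, σ ⟨i+1, hi⟩), ?_, ?_⟩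
    · simp only [Finset.mem_filter, Finset.mem_univ, true_and]
      refine ⟨by rw [Fin.lt_def]; omega, ?_⟩
      rw [Equiv.symm_apply_apply, Equiv.symm_apply_apply, Fin.lt_def]
      simp only []
      omega
    · simp only [Finset.mem_filter, Finset.mem_univ, true_and, not_and]
      intro _
      rw [symm_mul_swap, symm_mul_swap, Equiv.symm_apply_apply, Equiv.symm_apply_apply,
        Equiv.swap_apply_left, Equiv.swap_apply_right, Fin.lt_def]
      simp only []
      omega
  · intro p hp
    simp only [Finset.mem_filter, Finset.mem_univ, true_and] at hp ⊢
    obtain ⟨h12, hco⟩ := hp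
    rw [symm_mul_swap, symm_mul_swap] at hco
    refine ⟨h12, ?_⟩
    by_contra hcon
    have hne : σ.symm p.2 ≠ σ.symm p.1 := fun he =>
      absurd (σ.symm.injective he) (ne_of_gt h12)
    have h21 : σ.symm p.2 < σ.symm p.1 := lt_of_le_of_ne (le_of_not_gt hcon) hne
    refine absurd hco (lt_asymm (swap_adj_lt hi h21 ?_))
    rintro ⟨h1, h2⟩
    have hu : p.2 = σ ⟨i, Nat.lt_of_succ_lt hi⟩ := by rw [← h1, Equiv.apply_symm_apply]
    have hv : p.1 = σ ⟨i+1, hi⟩ := by rw [← h2, Equiv.apply_symm_apply]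
    rw [Fin.lt_def, hu, hv] at h12
    omega

lemma exists_min (hk : 2 ≤ k) :
    ∀ N (σ : Equiv.Perm (Fin n)), invCount σ ≤ N →
      ∃ α, recoilEquiv k n σ α ∧ kMinimal k α := by
  intro N
  induction N with
  | zero =>
    intro σ hσ
    by_cases h : kMinimal k σ
    · exact ⟨σ, recoil_refl σ, h⟩
    · exfalso
      rw [kMinimal, not_not] at h
      obtain ⟨i, hi, hd⟩ := h
      have := invCount_step hi hd hk
      omega
  | succ N IH =>
    intro σ hσ
    by_cases h : kMinimal k σ
    · exact ⟨σ, recoil_refl σ, h⟩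
    · rw [kMinimal, not_not] at h
      obtain ⟨i, hi, hd⟩ := h
      have hlt := invCount_step hi hd hk
      obtain ⟨α, h1, h2⟩ := IH (σ * Equiv.swap ⟨i, Nat.lt_of_succ_lt hi⟩ ⟨i+1, hi⟩) (by omega)
      exact ⟨α, recoil_trans (step_recoil hi (Or.inl hd)) h1, h2⟩

lemma exists_max (hk : 2 ≤ k) :
    ∀ N (σ : Equiv.Perm (Fin n)), coinvCount σ ≤ N →
      ∃ ω, recoilEquiv k n σ ω ∧ kMaximal k ω := by
  intro N
  induction N with
  | zero =>
    intro σ hσ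
    by_cases h : kMaximal k σ
    · exact ⟨σ, recoil_refl σ, h⟩
    · exfalso
      rw [kMaximal, not_not] at h
      obtain ⟨i, hi, hd⟩ := h
      have := coinvCount_step hi hd hk
      omega
  | succ N IH =>
    intro σ hσ
    by_cases h : kMaximal k σ
    · exact ⟨σ, recoil_refl σ, h⟩
    · rw [kMaximal, not_not] at h
      obtain ⟨i, hi, hd⟩ := h
      have hlt := coinvCount_step hi hd hk
      obtain ⟨ω, h1, h2⟩ := IH (σ * Equiv.swap ⟨i, Nat.lt_of_succ_lt hi⟩ ⟨i+1, hi⟩) (by omega)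
      exact ⟨ω, recoil_trans (step_recoil hi (Or.inr hd)) h1, h2⟩

/-- Every inversion of a `k`-minimal permutation is forced on its whole `≡_k` class. -/
lemma min_inv_subset (hk : 2 ≤ k) {α τ : Equiv.Perm (Fin n)}
    (hmin : kMinimal k α) (h : recoilEquiv k n α τ) :
    invSet α ⊆ invSet τ := by
  have H : ∀ g : ℕ, ∀ a b : Fin n, (a : ℕ) < b → α.symm b < α.symm a →
      (α.symm a : ℕ) - (α.symm b : ℕ) ≤ g → τ.symm b < τ.symm a := by
    intro g
    induction g using Nat.strong_induction_on with
    | _ g IH =>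
      intro a b hab hinv hgap
      by_cases hshort : (b : ℕ) - a < k
      · have hiff := h a b hab hshort
        have hne : τ.symm b ≠ τ.symm a := fun he => by
          have := τ.symm.injective he; subst this; omega
        rcases lt_or_ge (τ.symm b) (τ.symm a) with h' | h'
        · exact h'
        · exact absurd (hiff.mpr (lt_of_le_of_ne h' (Ne.symm hne))) (lt_asymm hinv)
      · by_cases hc : ∃ r : Fin n, α.symm b < r ∧ r < α.symm a ∧
            (a : ℕ) < α r ∧ (α r : ℕ) < b
        · obtain ⟨r, hr1, hr2, hr3, hr4⟩ := hc
          have hsr : α.symm (α r) = r := α.symm_apply_apply r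
          rw [Fin.lt_def] at hr1 hr2 hinv
          have hcb : τ.symm b < τ.symm (α r) := by
            refine IH ((r : ℕ) - (α.symm b : ℕ)) (by omega) (α r) b hr4 ?_ ?_
            · rw [hsr, Fin.lt_def]; omega
            · rw [hsr]
          have hac : τ.symm (α r) < τ.symm a := by
            refine IH ((α.symm a : ℕ) - (r : ℕ)) (by omega) a (α r) hr3 ?_ ?_
            · rw [hsr, Fin.lt_def]; omega
            · rw [hsr]
          exact hcb.trans hac
        · exfalso
          push_neg at hc hshort
          set p := α.symm b with hp
          set q := α.symm a with hq
          have hap : α p = b := α.apply_symm_apply b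
          have haq : α q = a := α.apply_symm_apply a
          set S := Finset.univ.filter (fun r : Fin n => p < r ∧ (α r : ℕ) ≤ a) with hS
          have hqS : q ∈ S := by
            simp only [hS, Finset.mem_filter, Finset.mem_univ, true_and]
            exact ⟨hinv, by rw [haq]⟩
          have hSne : S.Nonempty := ⟨q, hqS⟩
          set r0 := S.min' hSne with hr0
          have hr0S : r0 ∈ S := S.min'_mem hSne
          simp only [hS, Finset.mem_filter, Finset.mem_univ, true_and] at hr0S
          obtain ⟨hpr0, hval0⟩ := hr0S
          have hr0q : r0 ≤ q := S.min'_le q hqS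
          have hr0pos : 0 < (r0 : ℕ) := by
            rw [Fin.lt_def] at hpr0; omega
          have hr1n : (r0 : ℕ) - 1 < n := by
            have := r0.isLt; omega
          set r1 : Fin n := ⟨(r0 : ℕ) - 1, hr1n⟩ with hr1def
          have hr1val : (r1 : ℕ) = (r0 : ℕ) - 1 := rfl
          have hbound : (b : ℕ) ≤ (α r1 : ℕ) := by
            by_cases hcase : (r1 : ℕ) = (p : ℕ)
            · have : r1 = p := Fin.ext hcase
              rw [this, hap]
            · have hpr1 : p < r1 := by
                rw [Fin.lt_def] at hpr0 ⊢
                simp only [hr1def]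
                omega
              have hr1q : r1 < q := by
                rw [Fin.le_def] at hr0q
                rw [Fin.lt_def]
                simp only [hr1def]
                omega
              have h1 : ¬ (α r1 : ℕ) ≤ a := by
                intro hle
                have hmem : r1 ∈ S := by
                  simp only [hS, Finset.mem_filter, Finset.mem_univ, true_and]
                  exact ⟨hpr1, hle⟩
                have := S.min'_le r1 hmem
                rw [Fin.le_def] at this
                omega
              have h2 := hc r1 hpr1 hr1q
              omega
          have hr1r0 : (r1 : ℕ) + 1 = (r0 : ℕ) := by omega
          exact kMinimal_adj hmin hr1r0 (by omega)
  rintro ⟨a, b⟩ ⟨hab, hinv⟩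
  exact ⟨hab, H ((α.symm a : ℕ) - (α.symm b : ℕ)) a b hab hinv le_rfl⟩

/-- Every non-inversion of a `k`-maximal permutation is forced on its whole `≡_k` class. -/
lemma max_inv_supset (hk : 2 ≤ k) {ω τ : Equiv.Perm (Fin n)}
    (hmax : kMaximal k ω) (h : recoilEquiv k n ω τ) :
    invSet τ ⊆ invSet ω := by
  have H : ∀ g : ℕ, ∀ a b : Fin n, (a : ℕ) < b → ω.symm a < ω.symm b →
      (ω.symm b : ℕ) - (ω.symm a : ℕ) ≤ g → τ.symm a < τ.symm b := by
    intro g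
    induction g using Nat.strong_induction_on with
    | _ g IH =>
      intro a b hab hco hgap
      by_cases hshort : (b : ℕ) - a < k
      · exact (h a b hab hshort).mp hco
      · by_cases hc : ∃ r : Fin n, ω.symm a < r ∧ r < ω.symm b ∧
            (a : ℕ) < ω r ∧ (ω r : ℕ) < b
        · obtain ⟨r, hr1, hr2, hr3, hr4⟩ := hc
          have hsr : ω.symm (ω r) = r := ω.symm_apply_apply r
          rw [Fin.lt_def] at hr1 hr2 hco
          have hac : τ.symm a < τ.symm (ω r) := by
            refine IH ((r : ℕ) - (ω.symm a : ℕ)) (by omega) a (ω r) hr3 ?_ ?_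
            · rw [hsr, Fin.lt_def]; omega
            · rw [hsr]
          have hcb : τ.symm (ω r) < τ.symm b := by
            refine IH ((ω.symm b : ℕ) - (r : ℕ)) (by omega) (ω r) b hr4 ?_ ?_
            · rw [hsr, Fin.lt_def]; omega
            · rw [hsr]
          exact hac.trans hcb
        · exfalso
          push_neg at hc hshort
          set p := ω.symm a with hp
          set q := ω.symm b with hq
          have hap : ω p = a := ω.apply_symm_apply a
          have haq : ω q = b := ω.apply_symm_apply b
          set S := Finset.univ.filter (fun r : Fin n => p < r ∧ (b : ℕ) ≤ (ω r : ℕ)) with hS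
          have hqS : q ∈ S := by
            simp only [hS, Finset.mem_filter, Finset.mem_univ, true_and]
            exact ⟨hco, by rw [haq]⟩
          have hSne : S.Nonempty := ⟨q, hqS⟩
          set r0 := S.min' hSne with hr0
          have hr0S : r0 ∈ S := S.min'_mem hSne
          simp only [hS, Finset.mem_filter, Finset.mem_univ, true_and] at hr0S
          obtain ⟨hpr0, hval0⟩ := hr0S
          have hr0q : r0 ≤ q := S.min'_le q hqS
          have hr0pos : 0 < (r0 : ℕ) := by
            rw [Fin.lt_def] at hpr0; omega
          have hr1n : (r0 : ℕ) - 1 < n := by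
            have := r0.isLt; omega
          set r1 : Fin n := ⟨(r0 : ℕ) - 1, hr1n⟩ with hr1def
          have hr1val : (r1 : ℕ) = (r0 : ℕ) - 1 := rfl
          have hbound : (ω r1 : ℕ) ≤ (a : ℕ) := by
            by_cases hcase : (r1 : ℕ) = (p : ℕ)
            · have : r1 = p := Fin.ext hcase
              rw [this, hap]
            · have hpr1 : p < r1 := by
                rw [Fin.lt_def] at hpr0 ⊢
                simp only [hr1def]
                omega
              have hr1q : r1 < q := by
                rw [Fin.le_def] at hr0q
                rw [Fin.lt_def]
                simp only [hr1def]
                omega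
              have h1 : ¬ (b : ℕ) ≤ (ω r1 : ℕ) := by
                intro hle
                have hmem : r1 ∈ S := by
                  simp only [hS, Finset.mem_filter, Finset.mem_univ, true_and]
                  exact ⟨hpr1, hle⟩
                have := S.min'_le r1 hmem
                rw [Fin.le_def] at this
                omega
              have h2 := hc r1 hpr1 hr1q
              omega
          have hr1r0 : (r1 : ℕ) + 1 = (r0 : ℕ) := by omega
          exact kMaximal_adj hmax hr1r0 (by omega)
  rintro ⟨a, b⟩ ⟨hab, hinv⟩
  refine ⟨hab, ?_⟩
  by_contra hcon
  have hne : ω.symm a ≠ ω.symm b := fun he => by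
    have := ω.symm.injective he
    rw [Fin.lt_def] at hab
    subst this
    simp at hab
  have hco : ω.symm a < ω.symm b := lt_of_le_of_ne (le_of_not_gt hcon) hne
  exact absurd (H ((ω.symm b : ℕ) - (ω.symm a : ℕ)) a b hab hco le_rfl) (lt_asymm hinv)

end RecoilAux

/-- every `≡_k` class is an interval of the right weak order:
there are `α, ω` in the class such that the class is exactly
`{τ : Inv(α) ⊆ Inv(τ) ⊆ Inv(ω)}`. -/
theorem recoil_class_is_interval (k n : ℕ) (hk : 2 ≤ k)
    (σ : Equiv.Perm (Fin n)) :
    ∃ α ω : Equiv.Perm (Fin n), recoilEquiv k n σ α ∧ recoilEquiv k n σ ω ∧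
      ∀ τ, recoilEquiv k n σ τ ↔ (invSet α ⊆ invSet τ ∧ invSet τ ⊆ invSet ω) := by
  obtain ⟨α, hα, hαmin⟩ := RecoilAux.exists_min hk (RecoilAux.invCount σ) σ le_rfl
  obtain ⟨ω, hω, hωmax⟩ := RecoilAux.exists_max hk (RecoilAux.coinvCount σ) σ le_rfl
  refine ⟨α, ω, hα, hω, fun τ => ⟨fun hτ => ?_, fun ⟨h1, h2⟩ => ?_⟩⟩
  · constructor
    · exact RecoilAux.min_inv_subset hk hαmin
        (RecoilAux.recoil_trans (RecoilAux.recoil_symm hα) hτ)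
    · exact RecoilAux.max_inv_supset hk hωmax
        (RecoilAux.recoil_trans (RecoilAux.recoil_symm hω) hτ)
  · intro a b hab hshort
    have hne : σ.symm a ≠ σ.symm b := fun he => by
      have := σ.symm.injective he; subst this; omega
    have hneτ : τ.symm a ≠ τ.symm b := fun he => by
      have := τ.symm.injective he; subst this; omega
    constructor
    · intro hlt
      by_contra hcon
      have hba : τ.symm b < τ.symm a := lt_of_le_of_ne (le_of_not_gt hcon) (Ne.symm hneτ)
      have hmem : (⟨a, b⟩ : Fin n × Fin n) ∈ invSet τ := ⟨by rw [Fin.lt_def]; exact hab, hba⟩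
      have := (h2 hmem).2
      have hωiff := hω a b hab hshort
      exact absurd (hωiff.mp hlt) (lt_asymm this)
    · intro hlt
      by_contra hcon
      have hba : σ.symm b < σ.symm a := lt_of_le_of_ne (le_of_not_gt hcon) (Ne.symm hne)
      have hαiff := hα a b hab hshort
      have hneα : α.symm a ≠ α.symm b := fun he => by
        have := α.symm.injective he; subst this; omega
      have hαba : α.symm b < α.symm a := by
        by_contra hc2
        exact absurd (hαiff.mpr (lt_of_le_of_ne (le_of_not_gt hc2) hneα)) (lt_asymm hba)
      have hmem : (⟨a, b⟩ : Fin n × Fin n) ∈ invSet α := ⟨by rw [Fin.lt_def]; exact hab, hαba⟩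
      exact absurd (h1 hmem).2 (lt_asymm hlt)
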